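/- Let x be a collision-free solution of the first-order singular Cucker–Smale system with β > 1 for which x_1(t) < x_2(t) < … < x_N(t) for all t ≥ 0. Suppose that the index block I = {a+1, …, b} (with 0 ≤ a < b ≤ N) is a maximal cluster, i.e., sup_{t ≥ 0} |x_k(t) − x_l(t)| < ∞ for all k, l ∈ I, and |x_k(t) − x_l(t)| → ∞ as t → ∞ whenever k ∈ I and l ∉ I. Then the average velocity of the cluster converges: (1/(b−a)) Σ_{i=a+1}^{b} x_i'(t) → (1/(b−a)) Σ_{i=a+1}^{b} ν_i + κ(N − b − a)/(N(β−1)) as t → ∞. -/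

import Mathlib

open Real Filter Set Topology

/-- The potential function `Φ(x) = sign(x)·(β−1)⁻¹(1 − |x|^{1−β})` (with `Φ(0)=0`). -/
noncomputable def PhiCS (β y : ℝ) : ℝ := Real.sign y * (1 - |y| ^ (1 - β)) / (β - 1)

/-- A collision-free solution on `[0,∞)` of the first-order singular Cucker–Smale
system with short-range interaction:
`x_i'(t) = ν_i + (κ/N) Σ_{k≠i} Φ(x_k(t) − x_i(t))`, with `Σ_i x_i(0) = 0` and no
collisions for all `t ≥ 0`. -/
def IsCFSol (N : ℕ) (β κ : ℝ) (ν : Fin N → ℝ) (x : ℝ → Fin N → ℝ) : Prop :=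
  (∀ t ≥ (0:ℝ), ∀ i j : Fin N, i ≠ j → x t i ≠ x t j) ∧
  (∑ i, x 0 i = 0) ∧
  ∀ i, ∀ t ≥ (0:ℝ), HasDerivWithinAt (fun s => x s i)
    (ν i + (κ / (N:ℝ)) * ∑ k ∈ Finset.univ.erase i, PhiCS β (x t k - x t i)) (Set.Ici 0) t


lemma phiOdd (β y : ℝ) : PhiCS β (-y) = - PhiCS β y := by
  simp [PhiCS, Real.sign_neg, neg_div, neg_mul]

lemma sum_erase_antisymm {α : Type*} [DecidableEq α] (I : Finset α) (f : α → α → ℝ)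
    (hf : ∀ i k, f k i = - f i k) :
    ∑ i ∈ I, ∑ k ∈ I.erase i, f i k = 0 := by
  have h0 : ∀ i, f i i = 0 := fun i => by have := hf i i; linarith
  have hfull : ∑ i ∈ I, ∑ k ∈ I, f i k = 0 := by
    have h1 : ∑ i ∈ I, ∑ k ∈ I, f i k = ∑ k ∈ I, ∑ i ∈ I, f i k := Finset.sum_comm
    have h2 : ∑ k ∈ I, ∑ i ∈ I, f i k = ∑ k ∈ I, ∑ i ∈ I, -f k i :=
      Finset.sum_congr rfl fun k _ => Finset.sum_congr rfl fun i _ => hf k i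
    have h3 : ∑ k ∈ I, ∑ i ∈ I, -f k i = -∑ k ∈ I, ∑ i ∈ I, f k i := by
      simp [Finset.sum_neg_distrib]
    linarith [h1, h2 ▸ h1, h3]
  have hrow : ∀ i ∈ I, ∑ k ∈ I.erase i, f i k = ∑ k ∈ I, f i k := by
    intro i hi
    rw [← Finset.add_sum_erase I _ hi, h0, zero_add]
  rw [Finset.sum_congr rfl hrow, hfull]

lemma phi_tendsto (β : ℝ) (hβ : 1 < β) (s : ℝ) (g : ℝ → ℝ)
    (hs : ∀ᶠ t in atTop, Real.sign (g t) = s)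
    (hinf : Tendsto (fun t => |g t|) atTop atTop) :
    Tendsto (fun t => PhiCS β (g t)) atTop (𝓝 (s / (β - 1))) := by
  have h0 : Tendsto (fun t => |g t| ^ (1 - β)) atTop (𝓝 0) := by
    have := (tendsto_rpow_neg_atTop (by linarith : 0 < β - 1)).comp hinf
    simpa [Function.comp_def, neg_sub] using this
  have hlim : Tendsto (fun t => s * (1 - |g t| ^ (1 - β)) / (β - 1)) atTop
      (𝓝 (s * (1 - 0) / (β - 1))) :=
    ((tendsto_const_nhds.sub h0).const_mul s).div_const _
  have heq : ∀ᶠ t in atTop, s * (1 - |g t| ^ (1 - β)) / (β - 1) = PhiCS β (g t) :=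
    hs.mono fun t ht => by simp [PhiCS, ht]
  simpa using hlim.congr' heq

lemma card_filter_ico (N a b : ℕ) (hbN : b ≤ N) :
    (Finset.univ.filter (fun i : Fin N => a ≤ (i:ℕ) ∧ (i:ℕ) < b)).card = b - a := by
  have : (Finset.univ.filter (fun i : Fin N => a ≤ (i:ℕ) ∧ (i:ℕ) < b)).card
      = (Finset.Ico a b).card := by
    refine Finset.card_bij (fun i _ => (i:ℕ)) ?_ ?_ ?_
    · intro i hi; simp only [Finset.mem_filter, Finset.mem_univ, true_and] at hi
      simp [Finset.mem_Ico, hi.1, hi.2]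
    · intro i _ j _ h; exact Fin.ext h
    · intro n hn
      rw [Finset.mem_Ico] at hn
      exact ⟨⟨n, lt_of_lt_of_le hn.2 hbN⟩, by simp [hn.1, hn.2], rfl⟩
  rw [this, Nat.card_Ico]

theorem stmt14_aux (N : ℕ) (hN : 2 ≤ N) (β κ : ℝ) (hβ : 1 < β) 
    (ν : Fin N → ℝ)
    (x : ℝ → Fin N → ℝ)
    (hord : ∀ t ≥ (0:ℝ), StrictMono (x t))
    (a b : ℕ) (hab : a < b) (hbN : b ≤ N)
    (hsep : ∀ k l : Fin N, a ≤ (k:ℕ) → (k:ℕ) < b → ¬(a ≤ (l:ℕ) ∧ (l:ℕ) < b) →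
      Tendsto (fun t => |x t k - x t l|) atTop atTop) :
    Tendsto (fun t =>
        (1 / ((b:ℝ) - (a:ℝ))) * ∑ i ∈ Finset.univ.filter
          (fun i : Fin N => a ≤ (i:ℕ) ∧ (i:ℕ) < b),
          (ν i + (κ / (N:ℝ)) * ∑ k ∈ Finset.univ.erase i, PhiCS β (x t k - x t i)))
      atTop
      (𝓝 ((1 / ((b:ℝ) - (a:ℝ))) * (∑ i ∈ Finset.univ.filter
          (fun i : Fin N => a ≤ (i:ℕ) ∧ (i:ℕ) < b), ν i) +
        κ * ((N:ℝ) - (b:ℝ) - (a:ℝ)) / ((N:ℝ) * (β - 1)))) := by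
  set I : Finset (Fin N) := Finset.univ.filter (fun i : Fin N => a ≤ (i:ℕ) ∧ (i:ℕ) < b) with hI
  set c : Fin N → ℝ := fun k => (if (k:ℕ) < a then (-1:ℝ) else 1) / (β - 1) with hc
  -- basic facts
  have hβ0 : β - 1 ≠ 0 := by linarith
  have hN0 : (N:ℝ) ≠ 0 := by positivity
  have hba : (b:ℝ) - (a:ℝ) ≠ 0 := by
    have : (a:ℝ) < b := by exact_mod_cast hab
    linarith
  -- split of erased universe
  have hset : ∀ i ∈ I, Finset.univ.erase i = (I.erase i) ∪ (Finset.univ \ I) := by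
    intro i hi
    ext k
    simp only [Finset.mem_erase, Finset.mem_union, Finset.mem_sdiff, Finset.mem_univ,
      true_and, and_true]
    constructor
    · intro hk
      by_cases h : k ∈ I
      · exact Or.inl ⟨hk, h⟩
      · exact Or.inr h
    · rintro (⟨hk, _⟩ | hk)
      · exact hk
      · rintro rfl; exact hk hi
  -- the target function equals a simpler one
  have htarget : ∀ t : ℝ,
      (1 / ((b:ℝ) - (a:ℝ))) * ∑ i ∈ I,
        (ν i + (κ / (N:ℝ)) * ∑ k ∈ Finset.univ.erase i, PhiCS β (x t k - x t i))
      = (1 / ((b:ℝ) - (a:ℝ))) * (∑ i ∈ I, ν i) +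
        ((1 / ((b:ℝ) - (a:ℝ))) * (κ / (N:ℝ))) *
          ∑ i ∈ I, ∑ k ∈ Finset.univ \ I, PhiCS β (x t k - x t i) := by
    intro t
    have hdisj2 : ∀ i ∈ I, Disjoint (I.erase i) (Finset.univ \ I) := by
      intro i _
      refine Finset.disjoint_left.mpr fun k hk hk2 => ?_
      exact (Finset.mem_sdiff.mp hk2).2 (Finset.mem_of_mem_erase hk)
    have e2 : ∑ i ∈ I, ∑ k ∈ Finset.univ.erase i, PhiCS β (x t k - x t i)
        = ∑ i ∈ I, ∑ k ∈ Finset.univ \ I, PhiCS β (x t k - x t i) := by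
      have : ∀ i ∈ I, ∑ k ∈ Finset.univ.erase i, PhiCS β (x t k - x t i)
          = ∑ k ∈ I.erase i, PhiCS β (x t k - x t i)
            + ∑ k ∈ Finset.univ \ I, PhiCS β (x t k - x t i) := by
        intro i hi
        rw [hset i hi, Finset.sum_union (hdisj2 i hi)]
      rw [Finset.sum_congr rfl this, Finset.sum_add_distrib]
      have hz : ∑ i ∈ I, ∑ k ∈ I.erase i, PhiCS β (x t k - x t i) = 0 := by
        refine sum_erase_antisymm I (fun i k => PhiCS β (x t k - x t i)) fun i k => ?_
        show PhiCS β (x t i - x t k) = -PhiCS β (x t k - x t i)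
        rw [show x t i - x t k = -(x t k - x t i) by ring, phiOdd]
      rw [hz, zero_add]
    rw [Finset.sum_add_distrib, ← Finset.mul_sum, e2]
    ring
  -- convergence of the double sum
  have hF : Tendsto (fun t => ∑ i ∈ I, ∑ k ∈ Finset.univ \ I, PhiCS β (x t k - x t i))
      atTop (𝓝 (∑ i ∈ I, ∑ k ∈ Finset.univ \ I, c k)) := by
    refine tendsto_finset_sum _ fun i hi => tendsto_finset_sum _ fun k hk => ?_
    rw [hI, Finset.mem_filter] at hi
    have hia : a ≤ (i:ℕ) := hi.2.1
    have hib : (i:ℕ) < b := hi.2.2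
    have hknot : ¬(a ≤ (k:ℕ) ∧ (k:ℕ) < b) := by
      have := (Finset.mem_sdiff.mp hk).2
      rw [hI, Finset.mem_filter] at this
      simpa using this
    have hinf : Tendsto (fun t => |x t k - x t i|) atTop atTop := by
      have := hsep i k hia hib hknot
      refine this.congr fun t => ?_
      rw [abs_sub_comm]
    rcases (by omega : (k:ℕ) < a ∨ b ≤ (k:ℕ)) with h | h
    · have hs : ∀ᶠ t in atTop, Real.sign (x t k - x t i) = -1 :=
        (eventually_ge_atTop (0:ℝ)).mono fun t ht =>
          Real.sign_of_neg (sub_neg.mpr (hord t ht (show k < i by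
            rw [Fin.lt_def]; omega)))
      have := phi_tendsto β hβ (-1) _ hs hinf
      simpa [hc, h, neg_div] using this
    · have hs : ∀ᶠ t in atTop, Real.sign (x t k - x t i) = 1 :=
        (eventually_ge_atTop (0:ℝ)).mono fun t ht =>
          Real.sign_of_pos (sub_pos.mpr (hord t ht (show i < k by
            rw [Fin.lt_def]; omega)))
      have := phi_tendsto β hβ 1 _ hs hinf
      have h' : ¬ (k:ℕ) < a := by omega
      simpa [hc, h'] using this
  -- compute the limit value of the double sum
  have hinner : ∑ k ∈ Finset.univ \ I, c k = ((N:ℝ) - b - a) / (β - 1) := by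
    have hnot : Finset.univ \ I
        = Finset.univ.filter (fun k : Fin N => ¬(a ≤ (k:ℕ) ∧ (k:ℕ) < b)) := by
      rw [hI, Finset.filter_not]
    have hunion : Finset.univ.filter (fun k : Fin N => ¬(a ≤ (k:ℕ) ∧ (k:ℕ) < b))
        = Finset.univ.filter (fun k : Fin N => (k:ℕ) < a)
          ∪ Finset.univ.filter (fun k : Fin N => b ≤ (k:ℕ)) := by
      ext k
      simp only [Finset.mem_filter, Finset.mem_union, Finset.mem_univ, true_and]
      omega
    have hd : Disjoint (Finset.univ.filter (fun k : Fin N => (k:ℕ) < a))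
        (Finset.univ.filter (fun k : Fin N => b ≤ (k:ℕ))) := by
      refine Finset.disjoint_left.mpr fun k hk hk2 => ?_
      simp only [Finset.mem_filter, Finset.mem_univ, true_and] at hk hk2
      omega
    have hcardA : (Finset.univ.filter (fun k : Fin N => (k:ℕ) < a)).card = a := by
      have he : Finset.univ.filter (fun k : Fin N => (k:ℕ) < a)
          = Finset.univ.filter (fun k : Fin N => 0 ≤ (k:ℕ) ∧ (k:ℕ) < a) := by
        simp
      rw [he, card_filter_ico N 0 a (by omega)]
      omega
    have hcardB : (Finset.univ.filter (fun k : Fin N => b ≤ (k:ℕ))).card = N - b := by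
      have he : Finset.univ.filter (fun k : Fin N => b ≤ (k:ℕ))
          = Finset.univ.filter (fun k : Fin N => b ≤ (k:ℕ) ∧ (k:ℕ) < N) := by
        ext k; simp [k.isLt]
      rw [he, card_filter_ico N b N le_rfl]
    have hsumA : ∑ k ∈ Finset.univ.filter (fun k : Fin N => (k:ℕ) < a), c k
        = (a:ℝ) * ((-1) / (β - 1)) := by
      rw [Finset.sum_congr rfl (fun k hk => ?_), Finset.sum_const, hcardA,
        nsmul_eq_mul]
      simp only [Finset.mem_filter, Finset.mem_univ, true_and] at hk
      simp [hc, hk]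
    have hsumB : ∑ k ∈ Finset.univ.filter (fun k : Fin N => b ≤ (k:ℕ)), c k
        = ((N:ℝ) - b) * (1 / (β - 1)) := by
      rw [Finset.sum_congr rfl (fun k hk => ?_), Finset.sum_const, hcardB,
        nsmul_eq_mul, Nat.cast_sub hbN]
      simp only [Finset.mem_filter, Finset.mem_univ, true_and] at hk
      have : ¬ (k:ℕ) < a := by omega
      simp [hc, this]
    rw [hnot, hunion, Finset.sum_union hd, hsumA, hsumB]
    field_simp
    ring
  have hL : ∑ i ∈ I, ∑ k ∈ Finset.univ \ I, c k
      = ((b:ℝ) - a) * (((N:ℝ) - b - a) / (β - 1)) := by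
    rw [Finset.sum_congr rfl (fun i _ => hinner), Finset.sum_const,
      card_filter_ico N a b hbN, nsmul_eq_mul, Nat.cast_sub hab.le]
  -- assemble
  have hV : (1 / ((b:ℝ) - (a:ℝ))) * (∑ i ∈ I, ν i) +
        κ * ((N:ℝ) - (b:ℝ) - (a:ℝ)) / ((N:ℝ) * (β - 1))
      = (1 / ((b:ℝ) - (a:ℝ))) * (∑ i ∈ I, ν i) +
        ((1 / ((b:ℝ) - (a:ℝ))) * (κ / (N:ℝ))) *
          (∑ i ∈ I, ∑ k ∈ Finset.univ \ I, c k) := by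
    rw [hL]
    field_simp
  rw [hV]
  exact Tendsto.congr (fun t => (htarget t).symm)
    (tendsto_const_nhds.add (hF.const_mul _))

/-- The asymptotic group velocity of a maximal cluster `{a+1, …, b}` (1-based),
i.e. the indices `i` with `a ≤ i < b` in 0-based indexing: the average velocity
of the cluster converges to `ν̄ + κ(N − b − a)Φ^∞/N`. -/
theorem stmt14 (N : ℕ) (hN : 2 ≤ N) (β κ : ℝ) (hβ : 1 < β) (hκ : 0 < κ)
    (ν : Fin N → ℝ) (hν : ∑ i, ν i = 0)
    (x : ℝ → Fin N → ℝ) (hx : IsCFSol N β κ ν x)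
    (hord : ∀ t ≥ (0:ℝ), StrictMono (x t))
    (a b : ℕ) (hab : a < b) (hbN : b ≤ N)
    (hbound : ∀ k l : Fin N, a ≤ (k:ℕ) → (k:ℕ) < b → a ≤ (l:ℕ) → (l:ℕ) < b →
      ∃ M : ℝ, ∀ t ≥ (0:ℝ), |x t k - x t l| ≤ M)
    (hsep : ∀ k l : Fin N, a ≤ (k:ℕ) → (k:ℕ) < b → ¬(a ≤ (l:ℕ) ∧ (l:ℕ) < b) →
      Tendsto (fun t => |x t k - x t l|) atTop atTop) :
    Tendsto (fun t =>
        (1 / ((b:ℝ) - (a:ℝ))) * ∑ i ∈ Finset.univ.filter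
          (fun i : Fin N => a ≤ (i:ℕ) ∧ (i:ℕ) < b),
          (ν i + (κ / (N:ℝ)) * ∑ k ∈ Finset.univ.erase i, PhiCS β (x t k - x t i)))
      atTop
      (𝓝 ((1 / ((b:ℝ) - (a:ℝ))) * (∑ i ∈ Finset.univ.filter
          (fun i : Fin N => a ≤ (i:ℕ) ∧ (i:ℕ) < b), ν i) +
        κ * ((N:ℝ) - (b:ℝ) - (a:ℝ)) / ((N:ℝ) * (β - 1)))) := by
  exact stmt14_aux N hN β κ hβ ν x hord a b hab hbN hsep
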